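/- Let Φ(τ) = τ/log(e+τ) and define the variant Orlicz norm ‖f‖_{L_*^Φ} := Σ_{k∈ℤⁿ} ‖f·1_{Q_k}‖_{L^Φ}, where Q_k := k + [0,1)ⁿ. Then for any ball B ⊂ ℝⁿ, ‖1_B‖_{L_*^Φ} ≍ |B|/log(e+1/|B|), with implicit constants independent of B. -/

import Mathlib

open MeasureTheory ENNReal

/-- The Luxemburg (quasi-)norm of `f` in the Orlicz space `L^Φ(ℝⁿ)`,
valued in `ℝ≥0∞` (infimum of the empty set is `∞`). -/
noncomputable def luxNormE {n : ℕ} (Φ : ℝ → ℝ)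
    (f : EuclideanSpace ℝ (Fin n) → ℝ) : ℝ≥0∞ :=
  sInf ((fun l : NNReal => (l : ℝ≥0∞)) ''
    {l : NNReal | 0 < l ∧ ∫⁻ x, ENNReal.ofReal (Φ (|f x| / (l : ℝ))) ≤ 1})

/-- The unit cube `Q_k = k + [0,1)ⁿ` for `k ∈ ℤⁿ`. -/
def unitCube {n : ℕ} (k : Fin n → ℤ) : Set (EuclideanSpace ℝ (Fin n)) :=
  {x | ∀ i, (k i : ℝ) ≤ x i ∧ x i < (k i : ℝ) + 1}

/-- The variant Orlicz norm `‖f‖_{L_*^Φ} = Σ_{k∈ℤⁿ} ‖f·1_{Q_k}‖_{L^Φ}`. -/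
noncomputable def starNormE {n : ℕ} (Φ : ℝ → ℝ)
    (f : EuclideanSpace ℝ (Fin n) → ℝ) : ℝ≥0∞ :=
  ∑' k : Fin n → ℤ, luxNormE Φ (Set.indicator (unitCube k) f)

/-! ### Auxiliary material -/

noncomputable def Phi (τ : ℝ) : ℝ := τ / Real.log (Real.exp 1 + τ)

lemma one_le_logE {τ : ℝ} (h : 0 ≤ τ) : 1 ≤ Real.log (Real.exp 1 + τ) := by
  calc (1:ℝ) = Real.log (Real.exp 1) := (Real.log_exp 1).symm
  _ ≤ Real.log (Real.exp 1 + τ) := Real.log_le_log (Real.exp_pos 1) (by linarith)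

lemma logE_pos {τ : ℝ} (h : 0 ≤ τ) : 0 < Real.log (Real.exp 1 + τ) :=
  lt_of_lt_of_le one_pos (one_le_logE h)

lemma phi_mono {a b : ℝ} (ha : 0 ≤ a) (hab : a ≤ b) : Phi a ≤ Phi b := by
  have hb : 0 ≤ b := ha.trans hab
  have hLa := logE_pos ha
  have hLb := logE_pos hb
  have hea : (0:ℝ) < Real.exp 1 + a := lt_of_lt_of_le (Real.exp_pos 1) (by linarith)
  have heb : (0:ℝ) < Real.exp 1 + b := lt_of_lt_of_le (Real.exp_pos 1) (by linarith)
  rw [Phi, Phi, div_le_div_iff₀ hLa hLb]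
  have key : Real.log (Real.exp 1 + b) ≤
      Real.log (Real.exp 1 + a) + (b - a) / (Real.exp 1 + a) := by
    have h1 : Real.log ((Real.exp 1+b)/(Real.exp 1+a)) ≤ (Real.exp 1+b)/(Real.exp 1+a) - 1 :=
      Real.log_le_sub_one_of_pos (div_pos heb hea)
    have h2 : Real.log ((Real.exp 1+b)/(Real.exp 1+a))
        = Real.log (Real.exp 1+b) - Real.log (Real.exp 1+a) :=
      Real.log_div heb.ne' hea.ne'
    have h3 : (Real.exp 1+b)/(Real.exp 1+a) - 1 = (b-a)/(Real.exp 1+a) := by field_simp; ring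
    linarith [h1.trans_eq h3, h2]
  calc a * Real.log (Real.exp 1 + b)
      ≤ a * (Real.log (Real.exp 1 + a) + (b-a)/(Real.exp 1+a)) :=
        mul_le_mul_of_nonneg_left key ha
  _ = a * Real.log (Real.exp 1 + a) + (b-a) * (a/(Real.exp 1+a)) := by ring
  _ ≤ a * Real.log (Real.exp 1 + a) + (b-a) * 1 := by
        apply add_le_add_right
        apply mul_le_mul_of_nonneg_left _ (by linarith)
        rw [div_le_one hea]; linarith [Real.exp_pos 1]
  _ ≤ a * Real.log (Real.exp 1 + a) + (b-a) * Real.log (Real.exp 1 + a) := by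
        apply add_le_add_right
        exact mul_le_mul_of_nonneg_left (one_le_logE ha) (by linarith)
  _ = b * Real.log (Real.exp 1 + a) := by ring

lemma phi_nonneg {a : ℝ} (ha : 0 ≤ a) : 0 ≤ Phi a :=
  div_nonneg ha (logE_pos ha).le

lemma log_twoL_lt {L : ℝ} (hL : 1 ≤ L) : Real.log (2 * L) < L := by
  have hLpos : (0:ℝ) < L := by linarith
  have h1 : Real.log (2*L) = Real.log 2 + Real.log L := Real.log_mul two_ne_zero hLpos.ne'
  have h2 : Real.log L ≤ L - 1 := Real.log_le_sub_one_of_pos hLpos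
  have h3 : Real.log 2 < 1 := by
    calc Real.log 2 < Real.log (Real.exp 1) := by
          apply Real.log_lt_log two_pos
          have := Real.exp_one_gt_d9; linarith
    _ = 1 := Real.log_exp 1
  linarith

/-- Monotonicity of `t ↦ t log(e + 1/t)` on nonnegatives. -/
lemma h_mono {a c : ℝ} (ha : 0 ≤ a) (hac : a ≤ c) :
    a * Real.log (Real.exp 1 + 1/a) ≤ c * Real.log (Real.exp 1 + 1/c) := by
  have hc : 0 ≤ c := ha.trans hac
  rcases eq_or_lt_of_le ha with h0 | hapos
  · rw [← h0, zero_mul]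
    exact mul_nonneg hc (logE_pos (by positivity)).le
  · have hcpos : 0 < c := lt_of_lt_of_le hapos hac
    have hinv : 1/c ≤ 1/a := by
      apply div_le_div_of_nonneg_left one_pos.le hapos hac
    have h := phi_mono (by positivity : (0:ℝ) ≤ 1/c) hinv
    rw [Phi, Phi, div_le_div_iff₀ (logE_pos (by positivity)) (logE_pos (by positivity))] at h
    have h2 := mul_le_mul_of_nonneg_left h (mul_pos hapos hcpos).le
    have e1 : a*c*(1/c * Real.log (Real.exp 1 + 1/a)) = a * Real.log (Real.exp 1 + 1/a) := by
      field_simp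
    have e2 : a*c*(1/a * Real.log (Real.exp 1 + 1/c)) = c * Real.log (Real.exp 1 + 1/c) := by
      field_simp
    rw [e1, e2] at h2
    exact h2

lemma log_e_add_one_le_two : Real.log (Real.exp 1 + 1) ≤ 2 := by
  have h1 : Real.exp 1 + 1 ≤ Real.exp 2 := by
    have h2 : Real.exp 2 = Real.exp 1 * Real.exp 1 := by
      rw [← Real.exp_add]; norm_num
    nlinarith [Real.exp_one_gt_d9, Real.exp_one_lt_d9]
  calc Real.log (Real.exp 1 + 1) ≤ Real.log (Real.exp 2) :=
        Real.log_le_log (by positivity) h1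
  _ = 2 := Real.log_exp 2

/-! ### Cube facts -/

lemma mem_unitCube_iff {n : ℕ} (k : Fin n → ℤ) (x : EuclideanSpace ℝ (Fin n)) :
    x ∈ unitCube k ↔ k = fun i => ⌊x i⌋ := by
  constructor
  · intro h; funext i
    exact (Int.floor_eq_iff.mpr (h i)).symm ▸ rfl
  · rintro rfl i
    exact ⟨Int.floor_le _, Int.lt_floor_add_one _⟩

lemma unitCube_disjoint {n : ℕ} :
    Pairwise (Function.onFun Disjoint (fun k : Fin n → ℤ => unitCube k)) := by
  intro k k' hkk'
  refine Set.disjoint_left.mpr fun x hx hx' => hkk' ?_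
  rw [mem_unitCube_iff] at hx hx'; rw [hx, hx']

lemma iUnion_unitCube {n : ℕ} : (⋃ k : Fin n → ℤ, unitCube k) = Set.univ := by
  ext x
  simp only [Set.mem_iUnion, Set.mem_univ, iff_true]
  exact ⟨fun i => ⌊x i⌋, (mem_unitCube_iff _ _).mpr rfl⟩

lemma measurableSet_unitCube {n : ℕ} (k : Fin n → ℤ) : MeasurableSet (unitCube k) := by
  have : unitCube k
      = ⋂ i, (fun x : EuclideanSpace ℝ (Fin n) => x i) ⁻¹' (Set.Ico (k i : ℝ) ((k i : ℝ)+1)) := by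
    ext x; simp [unitCube, Set.mem_Ico]
  rw [this]
  exact MeasurableSet.iInter fun i => ((measurable_pi_apply i).comp (WithLp.measurable_ofLp 2 _)) measurableSet_Ico

lemma volume_unitCube {n : ℕ} (k : Fin n → ℤ) : volume (unitCube k) = 1 := by
  have hpre : unitCube k = (⇑(MeasurableEquiv.toLp 2 (Fin n → ℝ)).symm) ⁻¹'
      (Set.univ.pi fun i => Set.Ico (k i : ℝ) ((k i : ℝ)+1)) := by
    ext x; simp [unitCube, Set.mem_Ico, MeasurableEquiv.toLp_symm_apply]
  rw [hpre, (EuclideanSpace.volume_preserving_symm_measurableEquiv_toLp (Fin n)).measure_preimage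
    (MeasurableSet.univ_pi fun i => measurableSet_Ico).nullMeasurableSet]
  rw [volume_pi_pi]
  simp [Real.volume_Ico]

lemma tsum_volume_inter_unitCube {n : ℕ} (B : Set (EuclideanSpace ℝ (Fin n)))
    (hB : MeasurableSet B) : ∑' k : Fin n → ℤ, volume (B ∩ unitCube k) = volume B := by
  rw [← measure_iUnion (fun k k' h => (unitCube_disjoint h).mono
      Set.inter_subset_right Set.inter_subset_right)
      (fun k => hB.inter (measurableSet_unitCube k))]
  rw [← Set.inter_iUnion, iUnion_unitCube, Set.inter_univ]

/-! ### Luxemburg norm of indicators -/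

lemma lintegral_phi_indicator {n : ℕ} (A : Set (EuclideanSpace ℝ (Fin n)))
    (hA : MeasurableSet A) (l : ℝ) :
    ∫⁻ x, ENNReal.ofReal (Phi (|Set.indicator A (fun _ => (1:ℝ)) x| / l))
      = ENNReal.ofReal (Phi (1/l)) * volume A := by
  have heq : (fun x => ENNReal.ofReal (Phi (|Set.indicator A (fun _ => (1:ℝ)) x| / l)))
      = Set.indicator A (fun _ => ENNReal.ofReal (Phi (1/l))) := by
    funext x
    by_cases hx : x ∈ A
    · rw [Set.indicator_of_mem hx, Set.indicator_of_mem hx, abs_one]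
    · rw [Set.indicator_of_notMem hx, Set.indicator_of_notMem hx, abs_zero]
      simp [Phi]
  calc ∫⁻ x, ENNReal.ofReal (Phi (|Set.indicator A (fun _ => (1:ℝ)) x| / l))
      = ∫⁻ x, Set.indicator A (fun _ => ENNReal.ofReal (Phi (1/l))) x := by rw [heq]
  _ = ENNReal.ofReal (Phi (1/l)) * volume A := by
        rw [lintegral_indicator hA, setLIntegral_const]

lemma luxNormE_zero_of_null {n : ℕ} {A : Set (EuclideanSpace ℝ (Fin n))}
    (hA : MeasurableSet A) (h0 : volume A = 0) :
    luxNormE Phi (Set.indicator A (fun _ => (1:ℝ))) = 0 := by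
  refine le_antisymm ?_ zero_le
  refine ENNReal.le_of_forall_pos_le_add fun ε hε _ => ?_
  rw [zero_add]
  refine sInf_le ⟨ε, ⟨hε, ?_⟩, rfl⟩
  rw [lintegral_phi_indicator A hA (ε:ℝ), h0, mul_zero]
  exact zero_le_one

lemma luxNormE_le {n : ℕ} {A : Set (EuclideanSpace ℝ (Fin n))}
    (hA : MeasurableSet A) (hfin : volume A ≠ ⊤) :
    luxNormE Phi (Set.indicator A (fun _ => (1:ℝ))) ≤
      ENNReal.ofReal ((volume A).toReal /
        Real.log (Real.exp 1 + 1 / (volume A).toReal)) := by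
  set m := (volume A).toReal with hm
  rcases eq_or_lt_of_le (ENNReal.toReal_nonneg : 0 ≤ m) with h0 | hmpos
  · have hnull : volume A = 0 := by
      rcases (ENNReal.toReal_eq_zero_iff (volume A)).mp h0.symm with h | h
      · exact h
      · exact absurd h hfin
    rw [luxNormE_zero_of_null hA hnull]
    exact zero_le
  · set L := Real.log (Real.exp 1 + 1/m) with hL
    have hL1 : 1 ≤ L := one_le_logE (by positivity)
    have hLpos : 0 < L := lt_of_lt_of_le one_pos hL1
    have hml : 0 < m / L := div_pos hmpos hLpos
    have hcoe : (((m/L).toNNReal : NNReal) : ℝ) = m / L := Real.coe_toNNReal _ hml.le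
    refine sInf_le ⟨(m/L).toNNReal, ⟨by simpa using hml, ?_⟩, ?_⟩
    · rw [hcoe, lintegral_phi_indicator A hA (m/L)]
      have hvol : volume A = ENNReal.ofReal m := (ENNReal.ofReal_toReal hfin).symm
      rw [hvol, ← ENNReal.ofReal_mul (phi_nonneg (by positivity)), ← ENNReal.ofReal_one]
      apply ENNReal.ofReal_le_ofReal
      have h1 : 1 / (m/L) = L/m := by field_simp
      rw [h1]
      have hlog : L ≤ Real.log (Real.exp 1 + L/m) := by
        conv_lhs => rw [hL]
        apply Real.log_le_log (by positivity)
        have h2 : 1/m ≤ L/m := by gcongr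
        linarith
      have hlogpos : 0 < Real.log (Real.exp 1 + L/m) := logE_pos (by positivity)
      calc Phi (L/m) * m = L / Real.log (Real.exp 1 + L/m) := by
            rw [Phi, div_div, div_mul_eq_mul_div, mul_comm L m,
              mul_div_mul_left _ _ hmpos.ne']
      _ ≤ L / L := by gcongr
      _ = 1 := div_self hLpos.ne'
    · rw [ENNReal.ofReal]

lemma le_luxNormE {n : ℕ} {A : Set (EuclideanSpace ℝ (Fin n))}
    (hA : MeasurableSet A) (hfin : volume A ≠ ⊤) :
    ENNReal.ofReal ((volume A).toReal /
        (2 * Real.log (Real.exp 1 + 1 / (volume A).toReal))) ≤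
      luxNormE Phi (Set.indicator A (fun _ => (1:ℝ))) := by
  set m := (volume A).toReal with hm
  rcases eq_or_lt_of_le (ENNReal.toReal_nonneg : 0 ≤ m) with h0 | hmpos
  · rw [show m = 0 from h0.symm]
    simp
  · set L := Real.log (Real.exp 1 + 1/m) with hL
    have hL1 : 1 ≤ L := one_le_logE (by positivity)
    have hLpos : 0 < L := lt_of_lt_of_le one_pos hL1
    refine le_sInf ?_
    rintro x ⟨l, ⟨hl, hcond⟩, rfl⟩
    rw [lintegral_phi_indicator A hA (l:ℝ)] at hcond
    have hvol : volume A = ENNReal.ofReal m := (ENNReal.ofReal_toReal hfin).symm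
    rw [hvol, ← ENNReal.ofReal_mul (phi_nonneg (by positivity))] at hcond
    have hreal : Phi (1/(l:ℝ)) * m ≤ 1 := ENNReal.ofReal_le_one.mp hcond
    have hlpos : (0:ℝ) < l := hl
    have hmain : m / (2*L) ≤ (l:ℝ) := by
      by_contra hcon
      push_neg at hcon
      have h2L : 0 < 2*L := by linarith
      have hinv : 2*L/m < 1/(l:ℝ) := by
        rw [div_lt_div_iff₀ (by positivity) hlpos]
        calc 2*L*(l:ℝ) < 2*L*(m/(2*L)) := mul_lt_mul_of_pos_left hcon h2L
        _ = m := by field_simp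
        _ = 1 * m := (one_mul m).symm
      have hphile : Phi (2*L/m) ≤ Phi (1/(l:ℝ)) := phi_mono (by positivity) hinv.le
      have hcontra : Phi (2*L/m) * m ≤ 1 :=
        le_trans (mul_le_mul_of_nonneg_right hphile hmpos.le) hreal
      have hlog2 : Real.log (Real.exp 1 + 2*L/m) < 2*L := by
        have hle : Real.exp 1 + 2*L/m ≤ 2*L*(Real.exp 1 + 1/m) := by
          have h1 : Real.exp 1 ≤ 2*L*Real.exp 1 := by nlinarith [Real.exp_pos 1]
          have h2 : 2*L/m = 2*L*(1/m) := by ring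
          nlinarith [Real.exp_pos 1]
        calc Real.log (Real.exp 1 + 2*L/m) ≤ Real.log (2*L*(Real.exp 1 + 1/m)) :=
              Real.log_le_log (by positivity) hle
        _ = Real.log (2*L) + L := by rw [Real.log_mul (by positivity) (by positivity), hL]
        _ < L + L := by linarith [log_twoL_lt hL1]
        _ = 2*L := by ring
      have hlogpos : 0 < Real.log (Real.exp 1 + 2*L/m) := logE_pos (by positivity)
      have hval : Phi (2*L/m) * m = 2*L / Real.log (Real.exp 1 + 2*L/m) := by
        rw [Phi, div_div, div_mul_eq_mul_div, mul_comm (2*L) m,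
          mul_div_mul_left _ _ hmpos.ne']
      have : (1:ℝ) < Phi (2*L/m) * m := by
        rw [hval, lt_div_iff₀ hlogpos, one_mul]
        exact hlog2
      linarith
    calc ENNReal.ofReal (m/(2*L)) ≤ ENNReal.ofReal (l:ℝ) := ENNReal.ofReal_le_ofReal hmain
    _ = (l : ℝ≥0∞) := ENNReal.ofReal_coe_nnreal

/-! ### Geometry / counting -/

lemma unitCube_subset_ball {n : ℕ} {k : Fin n → ℤ} {x₀ : EuclideanSpace ℝ (Fin n)} {r : ℝ}
    (h : (Metric.ball x₀ r ∩ unitCube k).Nonempty) :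
    unitCube k ⊆ Metric.ball x₀ (r + (Real.sqrt n + 1)) := by
  obtain ⟨y, hyB, hyQ⟩ := h
  intro z hz
  rw [Metric.mem_ball]
  have hzy : dist z y ≤ Real.sqrt n := by
    rw [EuclideanSpace.dist_eq]
    apply Real.sqrt_le_sqrt
    calc (∑ i, dist (z i) (y i) ^ 2) ≤ ∑ i : Fin n, (1:ℝ) := by
          apply Finset.sum_le_sum
          intro i _
          have h1 := hz i
          have h2 := hyQ i
          rw [Real.dist_eq]
          have habs : |z i - y i| ≤ 1 :=
            abs_le.mpr ⟨by linarith [h1.1, h2.2], by linarith [h1.2, h2.1]⟩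
          nlinarith [abs_nonneg (z i - y i)]
    _ = n := by simp
  have hyx : dist y x₀ < r := Metric.mem_ball.mp hyB
  calc dist z x₀ ≤ dist z y + dist y x₀ := dist_triangle _ _ _
  _ < Real.sqrt n + r + 1 := by linarith
  _ = r + (Real.sqrt n + 1) := by ring

lemma finset_card_le_volume_ball {n : ℕ} (x₀ : EuclideanSpace ℝ (Fin n)) (r : ℝ)
    (T : Finset (Fin n → ℤ))
    (hT : ∀ k ∈ T, (Metric.ball x₀ r ∩ unitCube k).Nonempty) :
    (T.card : ℝ≥0∞) ≤ volume (Metric.ball x₀ (r + (Real.sqrt n + 1))) := by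
  have h1 : (T.card : ℝ≥0∞) = ∑ k ∈ T, volume (unitCube k) := by
    simp [volume_unitCube]
  rw [h1, ← measure_biUnion_finset ?hd (fun k _ => measurableSet_unitCube k)]
  · apply measure_mono
    exact Set.iUnion₂_subset fun k hk => unitCube_subset_ball (hT k hk)
  case hd =>
    intro k _ k' _ hkk'
    exact unitCube_disjoint hkk'

lemma setOf_cube_meets_ball_finite {n : ℕ} (x₀ : EuclideanSpace ℝ (Fin n)) (r : ℝ) :
    {k : Fin n → ℤ | (Metric.ball x₀ r ∩ unitCube k).Nonempty}.Finite := by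
  by_contra hinf
  rw [← Set.not_infinite, not_not] at hinf
  have hfin : volume (Metric.ball x₀ (r + (Real.sqrt n + 1))) < ⊤ := measure_ball_lt_top
  obtain ⟨N, hN⟩ := ENNReal.exists_nat_gt hfin.ne
  obtain ⟨T, hTsub, hTcard⟩ := hinf.exists_subset_card_eq N
  have := finset_card_le_volume_ball x₀ r T (fun k hk => hTsub hk)
  rw [hTcard] at this
  exact absurd (lt_of_le_of_lt this hN) (lt_irrefl _)

lemma euclidean_zero_univ (x₀ : EuclideanSpace ℝ (Fin 0)) (r : ℝ) (hr : 0 < r) :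
    Metric.ball x₀ r = Set.univ := by
  ext y
  simp only [Metric.mem_ball, Set.mem_univ, iff_true]
  have : y = x₀ := by ext i; exact i.elim0
  rw [this, dist_self]; exact hr

lemma volume_univ_euclidean_zero : volume (Set.univ : Set (EuclideanSpace ℝ (Fin 0))) = 1 := by
  have h := (EuclideanSpace.volume_preserving_symm_measurableEquiv_toLp (Fin 0)).measure_preimage
    (MeasurableSet.univ.nullMeasurableSet (μ := (volume : Measure (Fin 0 → ℝ))))
  have h2 : volume (Set.univ : Set (Fin 0 → ℝ)) = 1 := by
    rw [show (Set.univ : Set (Fin 0 → ℝ)) = Set.univ.pi (fun _ => Set.univ) by simp,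
      volume_pi_pi]
    simp
  simp only [Set.preimage_univ] at h
  rw [h, h2]

lemma max_one_pow {r : ℝ} (hr : 0 ≤ r) (n : ℕ) : (max 1 r)^n = max 1 (r^n) := by
  rcases le_total r 1 with h | h
  · rw [max_eq_left h, max_eq_left (pow_le_one₀ hr h), one_pow]
  · rw [max_eq_right h, max_eq_right (one_le_pow₀ h)]

lemma max_mul_max_bound {v b : ℝ} (hv : 0 ≤ v) (hb : 0 ≤ b) :
    max v b ≤ max v 1 * max 1 b := by
  apply max_le
  · exact le_trans (le_max_left v 1)
      (le_mul_of_one_le_right (le_trans zero_le_one (le_max_right v 1)) (le_max_left 1 b))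
  · exact le_trans (le_max_right 1 b)
      (le_mul_of_one_le_left (le_trans hb (le_max_right 1 b)) (le_max_right v 1))

lemma volume_ball_big_le_succ {m : ℕ} (x₀ : EuclideanSpace ℝ (Fin (m+1))) (r : ℝ) (hr : 0 < r) :
    volume (Metric.ball x₀ (r + (Real.sqrt (m+1:ℕ) + 1))) ≤
      ENNReal.ofReal (((2*(Real.sqrt (m+1:ℕ) + 1))^(m+1) *
        max (volume (Metric.ball (0:EuclideanSpace ℝ (Fin (m+1))) 1)).toReal 1) *
        max 1 (volume (Metric.ball x₀ r)).toReal) := by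
  set R₁ := Real.sqrt (m+1:ℕ) + 1 with hR₁
  have hR1 : 1 ≤ R₁ := by have := Real.sqrt_nonneg ((m+1:ℕ):ℝ); rw [hR₁]; linarith
  set v := (volume (Metric.ball (0:EuclideanSpace ℝ (Fin (m+1))) 1)).toReal with hv
  have hvpos : 0 < v := ENNReal.toReal_pos (Metric.measure_ball_pos _ _ one_pos).ne'
    measure_ball_lt_top.ne
  have hfr : Module.finrank ℝ (EuclideanSpace ℝ (Fin (m+1))) = m+1 := finrank_euclideanSpace_fin
  have hscale : ∀ ρ : ℝ, 0 ≤ ρ → volume (Metric.ball x₀ ρ) =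
      ENNReal.ofReal (ρ ^ (m+1) * v) := by
    intro ρ hρ
    rw [Measure.addHaar_ball _ _ hρ, hfr, ← ENNReal.ofReal_toReal
      (measure_ball_lt_top (x := (0:EuclideanSpace ℝ (Fin (m+1)))) (r := 1)).ne, ← hv,
      ← ENNReal.ofReal_mul (by positivity)]
  have hb : (volume (Metric.ball x₀ r)).toReal = r^(m+1) * v := by
    rw [hscale r hr.le, ENNReal.toReal_ofReal (by positivity)]
  rw [hscale (r + R₁) (by positivity), hb]
  apply ENNReal.ofReal_le_ofReal
  have h1 : r + R₁ ≤ 2*R₁*(max 1 r) := by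
    have ha : r ≤ max 1 r := le_max_right 1 r
    have hb' : (1:ℝ) ≤ max 1 r := le_max_left 1 r
    nlinarith
  calc (r + R₁)^(m+1) * v ≤ (2*R₁*(max 1 r))^(m+1) * v := by
        apply mul_le_mul_of_nonneg_right (pow_le_pow_left₀ (by positivity) h1 (m+1)) hvpos.le
  _ = (2*R₁)^(m+1) * ((max 1 r)^(m+1) * v) := by rw [mul_pow]; ring
  _ = (2*R₁)^(m+1) * (max 1 (r^(m+1)) * v) := by rw [max_one_pow hr.le]
  _ = (2*R₁)^(m+1) * max v (r^(m+1) * v) := by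
        rw [max_mul_of_nonneg _ _ hvpos.le, one_mul, max_comm]
  _ ≤ (2*R₁)^(m+1) * (max v 1 * max 1 (r^(m+1) * v)) := by
        apply mul_le_mul_of_nonneg_left (max_mul_max_bound hvpos.le (by positivity))
          (by positivity)
  _ = (2*R₁)^(m+1) * max v 1 * max 1 (r^(m+1) * v) := by ring

lemma volume_ball_big_le {n : ℕ} (x₀ : EuclideanSpace ℝ (Fin n)) (r : ℝ) (hr : 0 < r) :
    volume (Metric.ball x₀ (r + (Real.sqrt n + 1))) ≤
      ENNReal.ofReal (((2*(Real.sqrt n + 1))^n *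
        max (volume (Metric.ball (0:EuclideanSpace ℝ (Fin n)) 1)).toReal 1) *
        max 1 (volume (Metric.ball x₀ r)).toReal) := by
  rcases n with _ | m
  · rw [euclidean_zero_univ x₀ _ (by positivity), volume_univ_euclidean_zero,
      euclidean_zero_univ x₀ r hr, volume_univ_euclidean_zero]
    simp only [pow_zero, one_mul]
    rw [show ((1:ℝ≥0∞)).toReal = 1 from rfl, ← ENNReal.ofReal_one]
    apply ENNReal.ofReal_le_ofReal
    have h1 : (1:ℝ) ≤ max (volume (Metric.ball (0:EuclideanSpace ℝ (Fin 0)) 1)).toReal 1 :=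
      le_max_right _ _
    have h2 : (1:ℝ) ≤ max (1:ℝ) 1 := le_max_left _ _
    nlinarith
  · exact volume_ball_big_le_succ x₀ r hr

/-! ### Main theorem -/

/-- For Φ(τ) = τ/log(e+τ) and any ball B ⊂ ℝⁿ,
‖1_B‖_{L_*^Φ} ≍ |B|/log(e+1/|B|), with constants independent of B. -/
theorem starNorm_indicator_ball_equiv (n : ℕ) :
    ∃ c C : ℝ, 0 < c ∧ 0 < C ∧
      ∀ (x₀ : EuclideanSpace ℝ (Fin n)) (r : ℝ), 0 < r →
        ENNReal.ofReal (c * ((volume (Metric.ball x₀ r)).toReal /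
            Real.log (Real.exp 1 + 1 / (volume (Metric.ball x₀ r)).toReal))) ≤
          starNormE (fun τ => τ / Real.log (Real.exp 1 + τ))
            (Set.indicator (Metric.ball x₀ r) (fun _ => (1:ℝ))) ∧
        starNormE (fun τ => τ / Real.log (Real.exp 1 + τ))
            (Set.indicator (Metric.ball x₀ r) (fun _ => (1:ℝ))) ≤
          ENNReal.ofReal (C * ((volume (Metric.ball x₀ r)).toReal /
            Real.log (Real.exp 1 + 1 / (volume (Metric.ball x₀ r)).toReal))) := by
  classical
  set v := (volume (Metric.ball (0:EuclideanSpace ℝ (Fin n)) 1)).toReal with hv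
  set A := (2*(Real.sqrt n + 1))^n * max v 1 with hAdef
  have hsq : (0:ℝ) ≤ Real.sqrt n := Real.sqrt_nonneg _
  have hA1 : 1 ≤ A := by
    have h1 : (1:ℝ) ≤ (2*(Real.sqrt n+1))^n := one_le_pow₀ (by nlinarith)
    have h2 : (1:ℝ) ≤ max v 1 := le_max_right _ _
    nlinarith
  have hApos : 0 < A := lt_of_lt_of_le one_pos hA1
  refine ⟨1/(4*A), 1, by positivity, one_pos, fun x₀ r hr => ?_⟩
  have hPhi : (fun τ : ℝ => τ / Real.log (Real.exp 1 + τ)) = Phi := rfl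
  rw [hPhi]
  set B := Metric.ball x₀ r with hBdef
  have hBmeas : MeasurableSet B := measurableSet_ball
  have hBfin : volume B ≠ ⊤ := measure_ball_lt_top.ne
  set b := (volume B).toReal with hb
  have hbpos : 0 < b :=
    ENNReal.toReal_pos (Metric.measure_ball_pos _ _ hr).ne' hBfin
  set L := Real.log (Real.exp 1 + 1/b) with hL
  have hL1 : 1 ≤ L := one_le_logE (by positivity)
  have hLpos : 0 < L := lt_of_lt_of_le one_pos hL1
  -- rewrite starNormE
  have hstar : starNormE Phi (Set.indicator B (fun _ => (1:ℝ)))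
      = ∑' k : Fin n → ℤ, luxNormE Phi (Set.indicator (unitCube k ∩ B) (fun _ => (1:ℝ))) := by
    rw [starNormE]
    congr 1
    funext k
    rw [Set.indicator_indicator]
  -- per-cube data
  set m : (Fin n → ℤ) → ℝ := fun k => (volume (unitCube k ∩ B)).toReal with hmdef
  have hQBmeas : ∀ k, MeasurableSet (unitCube k ∩ B) :=
    fun k => (measurableSet_unitCube k).inter hBmeas
  have hQBfin : ∀ k : Fin n → ℤ, volume (unitCube k ∩ B) ≠ ⊤ := by
    intro k
    have h1 : volume (unitCube k ∩ B) ≤ 1 := by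
      rw [← volume_unitCube k]
      exact measure_mono Set.inter_subset_left
    exact (lt_of_le_of_lt h1 one_lt_top).ne
  have hmnn : ∀ k, 0 ≤ m k := fun k => ENNReal.toReal_nonneg
  have hm1 : ∀ k, m k ≤ 1 := by
    intro k
    have h1 : volume (unitCube k ∩ B) ≤ 1 := by
      rw [← volume_unitCube k]
      exact measure_mono Set.inter_subset_left
    calc m k ≤ (1:ℝ≥0∞).toReal := ENNReal.toReal_mono one_ne_top h1
    _ = 1 := rfl
  have hmb : ∀ k, m k ≤ b := fun k =>
    ENNReal.toReal_mono hBfin (measure_mono Set.inter_subset_right)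
  -- the finite index set
  set S : Finset (Fin n → ℤ) := (setOf_cube_meets_ball_finite x₀ r).toFinset with hSdef
  have hmemS : ∀ k : Fin n → ℤ, k ∈ S ↔ (B ∩ unitCube k).Nonempty := by
    intro k
    rw [hSdef, Set.Finite.mem_toFinset, Set.mem_setOf_eq, hBdef]
  have hout : ∀ k ∉ S, volume (unitCube k ∩ B) = 0 := by
    intro k hk
    have : ¬(B ∩ unitCube k).Nonempty := fun h => hk ((hmemS k).mpr h)
    rw [Set.not_nonempty_iff_eq_empty] at this
    rw [Set.inter_comm, this, measure_empty]
  have hsumvol : ∑ k ∈ S, volume (unitCube k ∩ B) = volume B := by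
    rw [← tsum_eq_sum (L := SummationFilter.unconditional _) hout]
    rw [← tsum_volume_inter_unitCube B hBmeas]
    congr 1; funext k; rw [Set.inter_comm]
  have hsum : ∑ k ∈ S, m k = b := by
    rw [hmdef, hb, ← ENNReal.toReal_sum (fun k _ => hQBfin k), hsumvol]
  -- cardinality bound
  have hcard : (S.card : ℝ) ≤ A * max 1 b := by
    have h1 : (S.card : ℝ≥0∞) ≤ volume (Metric.ball x₀ (r + (Real.sqrt n + 1))) :=
      finset_card_le_volume_ball x₀ r S (fun k hk => (hmemS k).mp hk)
    have h2 := h1.trans (volume_ball_big_le x₀ r hr)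
    have h3 : ((S.card : ℝ≥0∞)).toReal ≤ (ENNReal.ofReal (A * max 1 b)).toReal := by
      apply ENNReal.toReal_mono ofReal_ne_top
      rw [hAdef, hv]
      exact h2
    rw [ENNReal.toReal_natCast, ENNReal.toReal_ofReal (by positivity)] at h3
    exact h3
  constructor
  -- LOWER BOUND
  · rw [hstar]
    set Lk : (Fin n → ℤ) → ℝ := fun k => Real.log (Real.exp 1 + 1/(m k)) with hLkdef
    have hLk1 : ∀ k, 1 ≤ Lk k := fun k => one_le_logE (by positivity)
    have hLkpos : ∀ k, 0 < Lk k := fun k => lt_of_lt_of_le one_pos (hLk1 k)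
    -- Cauchy–Schwarz
    have hCS : b^2 ≤ (∑ k ∈ S, m k / Lk k) * (∑ k ∈ S, m k * Lk k) := by
      have key := Finset.sum_mul_sq_le_sq_mul_sq S
        (fun k => Real.sqrt (m k / Lk k)) (fun k => Real.sqrt (m k * Lk k))
      have e1 : ∀ k ∈ S, Real.sqrt (m k / Lk k) * Real.sqrt (m k * Lk k) = m k := by
        intro k _
        rw [← Real.sqrt_mul (div_nonneg (hmnn k) (hLkpos k).le)]
        have hprod : m k / Lk k * (m k * Lk k) = (m k)^2 := by
          field_simp [(hLkpos k).ne']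
        rw [hprod, Real.sqrt_sq (hmnn k)]
      have e2 : ∀ k ∈ S, (Real.sqrt (m k / Lk k))^2 = m k / Lk k := fun k _ =>
        Real.sq_sqrt (div_nonneg (hmnn k) (hLkpos k).le)
      have e3 : ∀ k ∈ S, (Real.sqrt (m k * Lk k))^2 = m k * Lk k := fun k _ =>
        Real.sq_sqrt (mul_nonneg (hmnn k) (hLkpos k).le)
      rw [Finset.sum_congr rfl e1, Finset.sum_congr rfl e2, Finset.sum_congr rfl e3,
        hsum] at key
      exact key
    -- bound on the second factor
    have hterm : ∀ k ∈ S, m k * Lk k ≤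
        min 1 b * Real.log (Real.exp 1 + 1/(min 1 b)) := by
      intro k _
      exact h_mono (hmnn k) (le_min (hm1 k) (hmb k))
    have hmu2 : min 1 b * Real.log (Real.exp 1 + 1/(min 1 b)) * (max 1 b) ≤ 2*b*L := by
      rcases le_total b 1 with hb1 | hb1
      · rw [min_eq_right hb1, max_eq_left hb1, mul_one]
        have : Real.log (Real.exp 1 + 1/b) = L := rfl
        nlinarith [hLpos, hbpos]
      · rw [min_eq_left hb1, max_eq_right hb1, one_mul]
        have h1 : (1:ℝ)/1 = 1 := by norm_num
        rw [h1]
        have h2 := log_e_add_one_le_two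
        nlinarith [hL1, hbpos]
    have hmunn : 0 ≤ min 1 b * Real.log (Real.exp 1 + 1/(min 1 b)) := by
      apply mul_nonneg (le_min zero_le_one hbpos.le) (logE_pos (by positivity)).le
    have hY : ∑ k ∈ S, m k * Lk k ≤ 2*A*b*L := by
      calc ∑ k ∈ S, m k * Lk k
          ≤ ∑ _k ∈ S, min 1 b * Real.log (Real.exp 1 + 1/(min 1 b)) :=
            Finset.sum_le_sum hterm
      _ = (S.card : ℝ) * (min 1 b * Real.log (Real.exp 1 + 1/(min 1 b))) := by
            rw [Finset.sum_const, nsmul_eq_mul]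
      _ ≤ (A * max 1 b) * (min 1 b * Real.log (Real.exp 1 + 1/(min 1 b))) :=
            mul_le_mul_of_nonneg_right hcard hmunn
      _ = A * (min 1 b * Real.log (Real.exp 1 + 1/(min 1 b)) * max 1 b) := by ring
      _ ≤ A * (2*b*L) := mul_le_mul_of_nonneg_left hmu2 hApos.le
      _ = 2*A*b*L := by ring
    have hXnn : 0 ≤ ∑ k ∈ S, m k / Lk k :=
      Finset.sum_nonneg fun k _ => div_nonneg (hmnn k) (hLkpos k).le
    have hX : b/(2*A*L) ≤ ∑ k ∈ S, m k / Lk k := by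
      have h2 : b^2 ≤ (∑ k ∈ S, m k / Lk k) * (2*A*b*L) :=
        hCS.trans (mul_le_mul_of_nonneg_left hY hXnn)
      rw [div_le_iff₀ (by positivity)]
      nlinarith [hbpos]
    have hhalf : ∑ k ∈ S, m k / (2 * Lk k) = (1/2) * ∑ k ∈ S, m k / Lk k := by
      rw [Finset.mul_sum]
      exact Finset.sum_congr rfl fun k _ => by
        rw [div_mul_eq_mul_div, mul_comm]
        ring
    have hfinal : (1/(4*A)) * (b/L) ≤ ∑ k ∈ S, m k / (2 * Lk k) := by
      rw [hhalf]
      have heq : (1/(4*A))*(b/L) = (1/2) * (b/(2*A*L)) := by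
        field_simp [hApos.ne', hLpos.ne']
        ring
      rw [heq]
      exact mul_le_mul_of_nonneg_left hX (by norm_num)
    calc ENNReal.ofReal (1/(4*A) * (b/L))
        ≤ ENNReal.ofReal (∑ k ∈ S, m k/(2*Lk k)) := ENNReal.ofReal_le_ofReal hfinal
    _ = ∑ k ∈ S, ENNReal.ofReal (m k/(2*Lk k)) :=
        ENNReal.ofReal_sum_of_nonneg fun k _ =>
          div_nonneg (hmnn k) (mul_nonneg two_pos.le (hLkpos k).le)
    _ ≤ ∑ k ∈ S, luxNormE Phi (Set.indicator (unitCube k ∩ B) (fun _ => (1:ℝ))) :=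
        Finset.sum_le_sum fun k _ => le_luxNormE (hQBmeas k) (hQBfin k)
    _ ≤ ∑' k : Fin n → ℤ, luxNormE Phi (Set.indicator (unitCube k ∩ B) (fun _ => (1:ℝ))) :=
        ENNReal.sum_le_tsum S
  -- UPPER BOUND
  · rw [hstar]
    have hperk : ∀ k : Fin n → ℤ,
        luxNormE Phi (Set.indicator (unitCube k ∩ B) (fun _ => (1:ℝ))) ≤
          ENNReal.ofReal (m k / L) := by
      intro k
      refine (luxNormE_le (hQBmeas k) (hQBfin k)).trans ?_
      apply ENNReal.ofReal_le_ofReal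
      rcases eq_or_lt_of_le (hmnn k) with h0 | hpos
      · rw [show (volume (unitCube k ∩ B)).toReal = m k from rfl, ← h0]; simp
      · apply div_le_div_of_nonneg_left (hmnn k) hLpos
        rw [hL]
        apply Real.log_le_log (by positivity)
        have : 1/b ≤ 1/(m k) := by
          apply div_le_div_of_nonneg_left one_pos.le hpos (hmb k)
        linarith
    calc ∑' k, luxNormE Phi (Set.indicator (unitCube k ∩ B) (fun _ => (1:ℝ)))
        ≤ ∑' k : Fin n → ℤ, ENNReal.ofReal (m k / L) := ENNReal.tsum_le_tsum hperk
    _ = ∑ k ∈ S, ENNReal.ofReal (m k / L) := by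
          apply tsum_eq_sum
          intro k hk
          rw [hmdef]
          simp only
          rw [hout k hk]
          simp
    _ = ENNReal.ofReal (∑ k ∈ S, m k / L) :=
          (ENNReal.ofReal_sum_of_nonneg (fun k _ => by positivity)).symm
    _ = ENNReal.ofReal (b / L) := by rw [← Finset.sum_div, hsum]
    _ = ENNReal.ofReal (1 * (b / L)) := by rw [one_mul]
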